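/- Let u : ℝ^d → ℝ^d be differentiable and x_i ∈ ℝ^d. Define the line-integral radial function ũ(x) = ∫₀¹ ⟪u(x_i + 2t(x - x_i)), 2(x - x_i)⟫ dt. Then ũ agrees with the pointwise radial component u_{i→}(x) = 2⟪u(x), x - x_i⟫ up to second order at x_i: ũ(x) - u_{i→}(x) = o(‖x - x_i‖²) as x → x_i. -/

import Mathlib

open Asymptotics

/-- the line-integral radial function
`ũ x = ∫₀¹ ⟪u(xi + 2t(x - xi)), 2(x - xi)⟫ dt` agrees with the pointwise radial
component `2⟪u x, x - xi⟫` up to second order at `xi`. -/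
theorem stmt6 (d : ℕ) (u : EuclideanSpace ℝ (Fin d) → EuclideanSpace ℝ (Fin d))
    (hu : ContDiff ℝ 1 u) (xi : EuclideanSpace ℝ (Fin d)) :
    (fun x =>
        (∫ t in (0:ℝ)..1,
          (inner ℝ (u (xi + (2 * t) • (x - xi))) ((2 : ℝ) • (x - xi)) : ℝ)) -
        (2 : ℝ) * inner ℝ (u x) (x - xi))
      =o[nhds xi] fun x => ‖x - xi‖ ^ 2 := by
  have hdiff : Differentiable ℝ u := hu.differentiable one_ne_zero
  set A := fderiv ℝ u xi with hAdef
  set r : EuclideanSpace ℝ (Fin d) → EuclideanSpace ℝ (Fin d) :=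
    fun y => u y - u xi - A (y - xi) with hrdef
  have hrcont : Continuous r := by
    apply Continuous.sub
    · exact hdiff.continuous.sub continuous_const
    · exact A.continuous.comp (continuous_id.sub continuous_const)
  have hA : (fun y => u y - u xi - A (y - xi)) =o[nhds xi] fun y => y - xi :=
    (hdiff xi).hasFDerivAt.isLittleO
  rw [isLittleO_iff] at hA ⊢
  intro c hc
  have h6 : (0:ℝ) < c / 6 := by positivity
  obtain ⟨ε, hε, hball⟩ := Metric.eventually_nhds_iff.mp (hA h6)
  filter_upwards [Metric.ball_mem_nhds xi (half_pos hε)] with x hx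
  set h : EuclideanSpace ℝ (Fin d) := x - xi with hh
  have hxnorm : ‖h‖ < ε / 2 := by
    rw [hh, ← dist_eq_norm]; exact hx
  -- decomposition of u
  have hudecomp : ∀ y : EuclideanSpace ℝ (Fin d), u y = u xi + A (y - xi) + r y := by
    intro y; simp only [hrdef]; abel
  -- pointwise integrand identity
  have hpt : ∀ t : ℝ, (inner ℝ (u (xi + (2 * t) • h)) ((2:ℝ) • h) : ℝ)
      = inner ℝ (u xi) ((2:ℝ) • h) + (2 * t) * (inner ℝ (A h) ((2:ℝ) • h) : ℝ)
        + inner ℝ (r (xi + (2 * t) • h)) ((2:ℝ) • h) := by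
    intro t
    rw [hudecomp (xi + (2 * t) • h)]
    have : (xi + (2 * t) • h) - xi = (2 * t) • h := by abel
    rw [this, inner_add_left, inner_add_left, A.map_smul, real_inner_smul_left]
  have hint3 : IntervalIntegrable
      (fun t : ℝ => (inner ℝ (r (xi + (2 * t) • h)) ((2:ℝ) • h) : ℝ)) MeasureTheory.volume 0 1 := by
    apply Continuous.intervalIntegrable
    exact ((hrcont.comp (continuous_const.add ((continuous_const.mul continuous_id).smul
      continuous_const))).inner continuous_const)
  have hint2 : IntervalIntegrable
      (fun t : ℝ => (2 * t) * (inner ℝ (A h) ((2:ℝ) • h) : ℝ)) MeasureTheory.volume 0 1 := by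
    exact (((continuous_const.mul continuous_id).mul continuous_const)).intervalIntegrable _ _
  have key : (∫ t in (0:ℝ)..1, (inner ℝ (u (xi + (2 * t) • h)) ((2:ℝ) • h) : ℝ))
      = inner ℝ (u xi) ((2:ℝ) • h) + (inner ℝ (A h) ((2:ℝ) • h) : ℝ)
        + ∫ t in (0:ℝ)..1, (inner ℝ (r (xi + (2 * t) • h)) ((2:ℝ) • h) : ℝ) := by
    simp_rw [hpt]
    rw [intervalIntegral.integral_add (by exact (intervalIntegrable_const).add hint2)
        hint3,
      intervalIntegral.integral_add intervalIntegrable_const hint2]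
    have h2t : (∫ t in (0:ℝ)..1, (2 * t) * (inner ℝ (A h) ((2:ℝ) • h) : ℝ))
        = (inner ℝ (A h) ((2:ℝ) • h) : ℝ) := by
      rw [intervalIntegral.integral_mul_const]
      have : (∫ t in (0:ℝ)..1, 2 * t) = 1 := by
        rw [intervalIntegral.integral_const_mul, integral_id]; norm_num
      rw [this, one_mul]
    rw [h2t]
    simp
  have hux : (2:ℝ) * (inner ℝ (u x) (x - xi) : ℝ)
      = inner ℝ (u xi) ((2:ℝ) • h) + (inner ℝ (A h) ((2:ℝ) • h) : ℝ)
        + inner ℝ (r x) ((2:ℝ) • h) := by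
    rw [hudecomp x]
    rw [show x - xi = h from rfl]
    rw [inner_add_left, inner_add_left, inner_smul_right, inner_smul_right, inner_smul_right]
    ring
  rw [key, hux]
  have hbig : ‖(∫ t in (0:ℝ)..1, (inner ℝ (r (xi + (2 * t) • h)) ((2:ℝ) • h) : ℝ))‖
      ≤ (c / 6 * (2 * ‖h‖)) * (2 * ‖h‖) := by
    have := intervalIntegral.norm_integral_le_of_norm_le_const
      (C := (c / 6 * (2 * ‖h‖)) * (2 * ‖h‖))
      (f := fun t : ℝ => (inner ℝ (r (xi + (2 * t) • h)) ((2:ℝ) • h) : ℝ))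
      (a := 0) (b := 1) ?_
    · simpa using this
    · intro t ht
      rw [Set.uIoc_of_le (by norm_num)] at ht
      obtain ⟨ht0, ht1⟩ := ht
      have hynorm : ‖(xi + (2 * t) • h) - xi‖ ≤ 2 * ‖h‖ := by
        have : (xi + (2 * t) • h) - xi = (2 * t) • h := by abel
        rw [this, norm_smul]
        have : ‖(2 * t : ℝ)‖ ≤ 2 := by
          rw [Real.norm_eq_abs, abs_of_pos (by linarith)]; linarith
        nlinarith [norm_nonneg h]
      have hdist : dist (xi + (2 * t) • h) xi < ε := by
        rw [dist_eq_norm]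
        calc ‖(xi + (2 * t) • h) - xi‖ ≤ 2 * ‖h‖ := hynorm
          _ < ε := by linarith
      have hrb : ‖r (xi + (2 * t) • h)‖ ≤ c / 6 * ‖(xi + (2 * t) • h) - xi‖ :=
        hball hdist
      calc ‖(inner ℝ (r (xi + (2 * t) • h)) ((2:ℝ) • h) : ℝ)‖
          ≤ ‖r (xi + (2 * t) • h)‖ * ‖(2:ℝ) • h‖ := norm_inner_le_norm _ _
        _ ≤ (c / 6 * (2 * ‖h‖)) * (2 * ‖h‖) := by
            rw [norm_smul]
            simp only [Real.norm_ofNat]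
            have h1 : ‖r (xi + (2 * t) • h)‖ ≤ c / 6 * (2 * ‖h‖) := by
              calc ‖r (xi + (2 * t) • h)‖ ≤ c / 6 * ‖(xi + (2 * t) • h) - xi‖ := hrb
                _ ≤ c / 6 * (2 * ‖h‖) := by
                    apply mul_le_mul_of_nonneg_left hynorm (le_of_lt h6)
            exact mul_le_mul_of_nonneg_right h1 (by positivity)
  have hsmall : ‖(inner ℝ (r x) ((2:ℝ) • h) : ℝ)‖ ≤ (c / 6 * ‖h‖) * (2 * ‖h‖) := by
    have hrb : ‖r x‖ ≤ c / 6 * ‖h‖ := by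
      have : dist x xi < ε := lt_trans hx (by linarith)
      exact hball this
    calc ‖(inner ℝ (r x) ((2:ℝ) • h) : ℝ)‖
        ≤ ‖r x‖ * ‖(2:ℝ) • h‖ := norm_inner_le_norm _ _
      _ ≤ (c / 6 * ‖h‖) * (2 * ‖h‖) := by
          rw [norm_smul]; simp only [Real.norm_ofNat]
          exact mul_le_mul hrb le_rfl (by positivity) (by positivity)
  have goal_eq : (inner ℝ (u xi) ((2:ℝ) • h) + (inner ℝ (A h) ((2:ℝ) • h) : ℝ)
        + ∫ t in (0:ℝ)..1, (inner ℝ (r (xi + (2 * t) • h)) ((2:ℝ) • h) : ℝ))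
      - (inner ℝ (u xi) ((2:ℝ) • h) + (inner ℝ (A h) ((2:ℝ) • h) : ℝ)
        + inner ℝ (r x) ((2:ℝ) • h))
      = (∫ t in (0:ℝ)..1, (inner ℝ (r (xi + (2 * t) • h)) ((2:ℝ) • h) : ℝ))
        - inner ℝ (r x) ((2:ℝ) • h) := by ring
  rw [goal_eq]
  calc ‖(∫ t in (0:ℝ)..1, (inner ℝ (r (xi + (2 * t) • h)) ((2:ℝ) • h) : ℝ))
        - inner ℝ (r x) ((2:ℝ) • h)‖
      ≤ ‖(∫ t in (0:ℝ)..1, (inner ℝ (r (xi + (2 * t) • h)) ((2:ℝ) • h) : ℝ))‖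
        + ‖(inner ℝ (r x) ((2:ℝ) • h) : ℝ)‖ := norm_sub_le _ _
    _ ≤ (c / 6 * (2 * ‖h‖)) * (2 * ‖h‖) + (c / 6 * ‖h‖) * (2 * ‖h‖) := by
        linarith
    _ ≤ c * ‖‖h‖ ^ 2‖ := by
        rw [Real.norm_eq_abs, abs_of_nonneg (by positivity)]
        nlinarith [norm_nonneg h, sq_nonneg ‖h‖]
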